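/- Let α_f, α_g ∈ ℝ and let q = (q₁,q₂) : ℝ → ℝ² be a twice differentiable curve with q₂(t) + q₁(t) ≠ 0 and q₂(t) − q₁(t) ≠ 0 for all t, satisfying q̈₁(t) = 2α_f/(q₂(t)+q₁(t))³ − 2α_g/(q₂(t)−q₁(t))³ and q̈₂(t) = 2α_f/(q₂(t)+q₁(t))³ + 2α_g/(q₂(t)−q₁(t))³ for all t. Then Ẽ(t) = q̇₁(t)q̇₂(t) + α_f/(q₁(t)+q₂(t))² − α_g/(q₁(t)−q₂(t))² is constant in t. -/

import Mathlib

/-- For the Calogero-type system with potential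
`α_f/(q₂+q₁)² + α_g/(q₂−q₁)²`, the quantity
`Ẽ = q̇₁q̇₂ + α_f/(q₁+q₂)² − α_g/(q₁−q₂)²` is a first integral. -/
theorem stmt_14 (αf αg : ℝ) (q₁ q₂ : ℝ → ℝ)
    (hq₁ : Differentiable ℝ q₁) (hq₁' : Differentiable ℝ (deriv q₁))
    (hq₂ : Differentiable ℝ q₂) (hq₂' : Differentiable ℝ (deriv q₂))
    (hne₁ : ∀ t : ℝ, q₂ t + q₁ t ≠ 0) (hne₂ : ∀ t : ℝ, q₂ t - q₁ t ≠ 0)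
    (heq₁ : ∀ t : ℝ, deriv (deriv q₁) t
      = 2 * αf / (q₂ t + q₁ t) ^ 3 - 2 * αg / (q₂ t - q₁ t) ^ 3)
    (heq₂ : ∀ t : ℝ, deriv (deriv q₂) t
      = 2 * αf / (q₂ t + q₁ t) ^ 3 + 2 * αg / (q₂ t - q₁ t) ^ 3) :
    ∃ c : ℝ, ∀ t : ℝ,
      deriv q₁ t * deriv q₂ t + αf / (q₁ t + q₂ t) ^ 2
        - αg / (q₁ t - q₂ t) ^ 2 = c := by
  set E : ℝ → ℝ := fun t =>
    deriv q₁ t * deriv q₂ t + αf / (q₁ t + q₂ t) ^ 2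
      - αg / (q₁ t - q₂ t) ^ 2 with hE
  have key : ∀ t : ℝ, HasDerivAt E 0 t := by
    intro t
    have h1 : HasDerivAt q₁ (deriv q₁ t) t := (hq₁ t).hasDerivAt
    have h2 : HasDerivAt q₂ (deriv q₂ t) t := (hq₂ t).hasDerivAt
    have h1' : HasDerivAt (deriv q₁) (deriv (deriv q₁) t) t := (hq₁' t).hasDerivAt
    have h2' : HasDerivAt (deriv q₂) (deriv (deriv q₂) t) t := (hq₂' t).hasDerivAt
    have hs : q₁ t + q₂ t ≠ 0 := by have := hne₁ t; intro h; apply this; linarith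
    have hd : q₁ t - q₂ t ≠ 0 := by have := hne₂ t; intro h; apply this; linarith
    have hsum : HasDerivAt (fun t => q₁ t + q₂ t) (deriv q₁ t + deriv q₂ t) t := h1.add h2
    have hdiff : HasDerivAt (fun t => q₁ t - q₂ t) (deriv q₁ t - deriv q₂ t) t := h1.sub h2
    have hs2 : HasDerivAt (fun t => (q₁ t + q₂ t) ^ 2)
        (2 * (q₁ t + q₂ t) ^ 1 * (deriv q₁ t + deriv q₂ t)) t := by
      simpa using hsum.fun_pow 2
    have hd2 : HasDerivAt (fun t => (q₁ t - q₂ t) ^ 2)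
        (2 * (q₁ t - q₂ t) ^ 1 * (deriv q₁ t - deriv q₂ t)) t := by
      simpa using hdiff.fun_pow 2
    have hA : HasDerivAt (fun t => αf / (q₁ t + q₂ t) ^ 2)
        (-(αf * (2 * (q₁ t + q₂ t) ^ 1 * (deriv q₁ t + deriv q₂ t))) / ((q₁ t + q₂ t) ^ 2) ^ 2)
        t := by
      simpa using (hasDerivAt_const t αf).fun_div hs2 (pow_ne_zero 2 hs)
    have hB : HasDerivAt (fun t => αg / (q₁ t - q₂ t) ^ 2)
        (-(αg * (2 * (q₁ t - q₂ t) ^ 1 * (deriv q₁ t - deriv q₂ t))) / ((q₁ t - q₂ t) ^ 2) ^ 2)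
        t := by
      simpa using (hasDerivAt_const t αg).fun_div hd2 (pow_ne_zero 2 hd)
    have hmul : HasDerivAt (fun t => deriv q₁ t * deriv q₂ t)
        (deriv (deriv q₁) t * deriv q₂ t + deriv q₁ t * deriv (deriv q₂) t) t := h1'.mul h2'
    have hE' : HasDerivAt E _ t := (hmul.fun_add hA).fun_sub hB
    convert hE' using 1
    rw [heq₁ t, heq₂ t]
    have hs' : q₂ t + q₁ t ≠ 0 := hne₁ t
    have hd' : q₂ t - q₁ t ≠ 0 := hne₂ t
    field_simp
    ring
  obtain ⟨c, hc⟩ : ∃ c, ∀ t, E t = c := by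
    refine ⟨E 0, fun t => ?_⟩
    have : ∀ x : ℝ, deriv E x = 0 := fun x => (key x).deriv
    have hconst := is_const_of_deriv_eq_zero (fun x => (key x).differentiableAt) this t 0
    exact hconst
  exact ⟨c, fun t => hc t⟩
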